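/- arXiv:2308.16347 — 2 statements merged into one kernel-verified Lean document; each statement's English description precedes it below -/
import Mathlib

section
/- In the blow-up setting, define r_k by r_k³ = (−λ_k/c_k²) exp(−α_k c_k²). Then for every γ < 12π², one has r_k³ e^{γ c_k²} → 0 as k → ∞ (indeed c_k² r_k³ e^{γ c_k²} remains bounded). -/
open MeasureTheory Real Filter Metric
open scoped Real ENNReal Topology NNReal

noncomputable section

abbrev E4 : Type := EuclideanSpace ℝ (Fin 4)

/-- The Laplacian of a function `u : E4 → ℝ`, defined as the trace of the second derivative. -/
def lap (u : E4 → ℝ) (x : E4) : ℝ :=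
  ∑ i : Fin 4, iteratedFDeriv ℝ 2 u x ![EuclideanSpace.single i 1, EuclideanSpace.single i 1]

/-- The directional derivative of `u` in the direction of the vector field `ν`. -/
def ndiv (ν : E4 → E4) (u : E4 → ℝ) (x : E4) : ℝ := inner ℝ (gradient u x) (ν x)

/-- A bounded domain in `ℝ⁴` with smooth boundary, together with its outward unit
normal vector field `ν`. -/
structure SmoothDomain : Type where
  Ω : Set E4
  ν : E4 → E4
  isOpen : IsOpen Ω
  nonempty : Ω.Nonempty
  bounded : Bornology.IsBounded Ω
  smooth : ∃ f : E4 → ℝ, ContDiff ℝ (⊤ : ℕ∞) f ∧ Ω = {x | f x < 0} ∧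
    ∀ x ∈ frontier Ω, gradient f x ≠ 0 ∧ ν x = ‖gradient f x‖⁻¹ • gradient f x

/-- Surface (Bochner) integral over the boundary `∂Ω`, with respect to
three-dimensional Hausdorff measure. -/
def bInt (D : SmoothDomain) (g : E4 → ℝ) : ℝ := ∫ x in frontier D.Ω, g x ∂μH[3]

/-- Surface lower integral over the boundary `∂Ω`. -/
def bLInt (D : SmoothDomain) (g : E4 → ℝ) : ℝ≥0∞ :=
  ∫⁻ x in frontier D.Ω, ENNReal.ofReal (g x) ∂μH[3]

/-- The area `|∂Ω|` of the boundary. -/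
def area (D : SmoothDomain) : ℝ := (μH[3] (frontier D.Ω)).toReal

/-- The volume `|Ω|` of the domain. -/
def vol (D : SmoothDomain) : ℝ := (volume D.Ω).toReal

/-- Membership in the class `H = {u ∈ W^{2,2}(Ω) : ‖Δu‖₂ ≤ 1, ∫_Ω u = 0, ∂u/∂ν = 0 on ∂Ω}`,
with `W^{2,2}`-regularity expressed through `C²`-smoothness on a neighbourhood of `Ω̄`. -/
def memH (D : SmoothDomain) (u : E4 → ℝ) : Prop :=
  (∃ U : Set E4, IsOpen U ∧ closure D.Ω ⊆ U ∧ ContDiffOn ℝ 2 u U) ∧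
  (∫ x in D.Ω, (lap u x) ^ 2) ≤ 1 ∧
  (∫ x in D.Ω, u x) = 0 ∧
  ∀ x ∈ frontier D.Ω, ndiv D.ν u x = 0

/-- `u` is not identically zero on `Ω`. -/
def nonzeroOn (D : SmoothDomain) (u : E4 → ℝ) : Prop := ¬ Set.EqOn u 0 D.Ω

/-- The blow-up setting: an increasing sequence `α_k ↗ 12π²` of subcritical exponents together
with smooth maximizers `u_k ∈ H` of `I_{α_k}` satisfying the Euler–Lagrange system with
multipliers `λ_k, γ_k`, maximum points `x_k` with `c_k = u_k(x_k) = max_Ω |u_k| → +∞`. -/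
structure Blowup (D : SmoothDomain) : Type where
  α : ℕ → ℝ
  u : ℕ → E4 → ℝ
  lam : ℕ → ℝ
  gam : ℕ → ℝ
  c : ℕ → ℝ
  xk : ℕ → E4
  α_mono : StrictMono α
  α_lt : ∀ k, α k < 12 * π ^ 2
  α_lim : Filter.Tendsto α Filter.atTop (nhds (12 * π ^ 2))
  mem : ∀ k, memH D (u k)
  smooth : ∀ k, ContDiffOn ℝ (⊤ : ℕ∞) (u k) D.Ω
  max : ∀ k, ∀ v : E4 → ℝ, memH D v →
    bInt D (fun x => Real.exp (α k * (v x) ^ 2)) ≤ bInt D (fun x => Real.exp (α k * (u k x) ^ 2))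
  lam_def : ∀ k, lam k = -bInt D (fun x => (u k x) ^ 2 * Real.exp (α k * (u k x) ^ 2))
  gam_def : ∀ k, gam k = (lam k * vol D)⁻¹ * bInt D (fun x => u k x * Real.exp (α k * (u k x) ^ 2))
  el_interior : ∀ k, ∀ x ∈ D.Ω, lap (lap (u k)) x = gam k
  el_boundary : ∀ k, ∀ x ∈ frontier D.Ω,
    ndiv D.ν (lap (u k)) x = u k x * Real.exp (α k * (u k x) ^ 2) / lam k
  energy : ∀ k, (∫ x in D.Ω, (lap (u k) x) ^ 2) = 1
  xk_mem : ∀ k, xk k ∈ closure D.Ω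
  c_def : ∀ k, c k = u k (xk k)
  c_max : ∀ k, ∀ x ∈ closure D.Ω, |u k x| ≤ c k
  c_blowup : Filter.Tendsto c Filter.atTop Filter.atTop

/-- The blow-up scale `r_k`, defined by `r_k³ = (−λ_k/c_k²) exp(−α_k c_k²)`. -/
def rk {D : SmoothDomain} (B : Blowup D) (k : ℕ) : ℝ :=
  ((-B.lam k / (B.c k) ^ 2) * Real.exp (-(B.α k) * (B.c k) ^ 2)) ^ ((1 : ℝ) / 3)

set_option maxHeartbeats 1000000 in
/-- A bounded subset of a 3-dimensional subspace of `E4` has finite `μH[3]` measure. -/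
lemma finite_hausdorff_of_submodule (W : Submodule ℝ E4) (hW : Module.finrank ℝ W = 3)
    (R : ℝ) : μH[3] ((W : Set E4) ∩ Metric.closedBall 0 R) < ⊤ := by
  have repr0 := (stdOrthonormalBasis ℝ W).repr
  rw [hW] at repr0
  set Φ : EuclideanSpace ℝ (Fin 3) → E4 := fun z => ((repr0.symm z : W) : E4) with hΦdef
  have hΦ : Isometry Φ := isometry_subtype_coe.comp repr0.symm.isometry
  have hcover : ((W : Set E4) ∩ Metric.closedBall 0 R) ⊆ Φ '' (Metric.closedBall 0 R) := by
    rintro x ⟨hxW, hxB⟩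
    refine ⟨repr0 ⟨x, hxW⟩, ?_, ?_⟩
    · rw [mem_closedBall_zero_iff]
      rw [repr0.norm_map]
      simpa [mem_closedBall_zero_iff] using hxB
    · simp [hΦdef]
  have h1 : μH[3] ((W : Set E4) ∩ Metric.closedBall 0 R)
      ≤ μH[3] (Φ '' (Metric.closedBall 0 R)) := measure_mono hcover
  have h2 : μH[3] (Φ '' (Metric.closedBall 0 R))
      = μH[3] (Metric.closedBall (0 : EuclideanSpace ℝ (Fin 3)) R) :=
    hΦ.hausdorffMeasure_image (Or.inl (by norm_num)) _
  -- now bound the Hausdorff measure of a Euclidean ball in dimension 3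
  set e3 := WithLp.equiv 2 (Fin 3 → ℝ) with he3
  set K : ℝ≥0 := (3:ℝ≥0) ^ ((2:ℝ)⁻¹) with hK
  have hanti := PiLp.antilipschitzWith_ofLp 2 (fun _ : Fin 3 => ℝ)
  have hlip : LipschitzWith K (⇑e3.symm) := by
    intro a b
    simpa [he3] using hanti (e3.symm a) (e3.symm b)
  have himg : Metric.closedBall (0 : EuclideanSpace ℝ (Fin 3)) R
      = ⇑e3.symm '' (⇑e3 '' (Metric.closedBall 0 R)) := (Equiv.symm_image_image e3 _).symm
  have h3 : μH[3] (Metric.closedBall (0 : EuclideanSpace ℝ (Fin 3)) R)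
      ≤ (K : ℝ≥0∞) ^ (3:ℝ) * μH[3] (⇑e3 '' (Metric.closedBall 0 R)) := by
    conv_lhs => rw [himg]
    exact LipschitzOnWith.hausdorffMeasure_image_le (K := K) (f := ⇑e3.symm)
      (s := ⇑e3 '' (Metric.closedBall 0 R)) (d := 3) hlip.lipschitzOnWith (by norm_num)
  have hpi : (μH[3] : Measure (Fin 3 → ℝ)) = volume := by
    have := hausdorffMeasure_pi_real (ι := Fin 3)
    simpa using this
  have hball : ⇑e3 '' (Metric.closedBall (0 : EuclideanSpace ℝ (Fin 3)) R)
      ⊆ Metric.closedBall (0 : Fin 3 → ℝ) R := by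
    rintro y ⟨x, hx, rfl⟩
    rw [mem_closedBall_zero_iff]
    have h5 := (PiLp.lipschitzWith_ofLp 2 (fun _ : Fin 3 => ℝ)) x 0
    have h6 : ‖e3 x‖ ≤ ‖x‖ := by
      have := h5
      simp only [edist_nndist] at this
      have h7 := (PiLp.lipschitzWith_ofLp 2 (fun _ : Fin 3 => ℝ)).dist_le_mul x 0
      simpa [dist_eq_norm, he3] using h7
    exact h6.trans (by simpa [mem_closedBall_zero_iff] using hx)
  have h4 : μH[3] (⇑e3 '' (Metric.closedBall (0 : EuclideanSpace ℝ (Fin 3)) R)) < ⊤ := by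
    rw [hpi]
    exact lt_of_le_of_lt (measure_mono hball)
      (isCompact_closedBall _ _).measure_lt_top
  calc μH[3] ((W : Set E4) ∩ Metric.closedBall 0 R)
      ≤ (K : ℝ≥0∞) ^ (3:ℝ) * μH[3] (⇑e3 '' (Metric.closedBall 0 R)) := by
        rw [← h2] at h3; exact h1.trans h3
    _ < ⊤ := ENNReal.mul_lt_top (by
        apply ENNReal.rpow_lt_top_of_nonneg (by norm_num)
        exact ENNReal.coe_ne_top) h4

set_option maxHeartbeats 1000000 in
lemma frontier_hausdorff_finite (D : SmoothDomain) : μH[3] (frontier D.Ω) < ⊤ := by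
  obtain ⟨f, hf, hΩeq, hgrad⟩ := D.smooth
  set K := frontier D.Ω with hKdef
  have hKcl : IsClosed K := isClosed_frontier
  have hKbd : Bornology.IsBounded K := (D.bounded.closure).subset frontier_subset_closure
  have hKcompact : IsCompact K := Metric.isCompact_of_isClosed_isBounded hKcl hKbd
  have hfzero : ∀ x ∈ K, f x = 0 := by
    intro x hx
    have hxcl : x ∈ closure D.Ω := frontier_subset_closure hx
    have hle : f x ≤ 0 := by
      have hsub : closure D.Ω ⊆ {y | f y ≤ 0} := by
        apply closure_minimal
        · rw [hΩeq]
          intro y hy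
          simp only [Set.mem_setOf_eq] at hy ⊢
          exact le_of_lt hy
        · exact isClosed_le hf.continuous continuous_const
      exact hsub hxcl
    have hge : 0 ≤ f x := by
      have hnot' : x ∉ interior D.Ω := hx.2
      rw [D.isOpen.interior_eq] at hnot'
      have hnot : x ∉ D.Ω := hnot'
      rw [hΩeq] at hnot
      simpa using not_lt.mp hnot
    linarith
  have hfd : Differentiable ℝ f := hf.differentiable (by simp)
  have hcont : Continuous fun x => fderiv ℝ f x := hf.continuous_fderiv (by simp)
  have key : ∀ p ∈ K, ∃ r > 0, μH[3] (K ∩ Metric.closedBall p r) < ⊤ := by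
    intro p hp
    set L := fderiv ℝ f p with hL
    set g := gradient f p with hg
    have hg0 : g ≠ 0 := (hgrad p hp).1
    set m := ‖g‖ with hm
    have hm0 : 0 < m := norm_pos_iff.mpr hg0
    set e := m⁻¹ • g with he
    have hnorme : ‖e‖ = 1 := by
      rw [he, norm_smul, Real.norm_eq_abs, abs_of_pos (inv_pos.mpr hm0), ← hm]
      field_simp
    have hge' : g = m • e := by
      rw [he, smul_smul]
      rw [mul_inv_cancel₀ (ne_of_gt hm0), one_smul]
    have hLg : ∀ v, L v = (inner ℝ g v : ℝ) := by
      intro v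
      have hgdef : g = (InnerProductSpace.toDual ℝ E4).symm L := rfl
      rw [hgdef, InnerProductSpace.toDual_symm_apply]
    have hev : ∀ᶠ x in 𝓝 p, ‖fderiv ℝ f x - L‖ < m/4 := by
      have ht := hcont.tendsto p
      have hb : Metric.ball L (m/4) ∈ 𝓝 (fderiv ℝ f p) := by
        rw [← hL]; exact Metric.ball_mem_nhds _ (by positivity)
      filter_upwards [ht hb] with x hx
      simpa [Metric.mem_ball, dist_eq_norm] using hx
    rw [Metric.eventually_nhds_iff_ball] at hev
    obtain ⟨ε, hε, hball⟩ := hev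
    refine ⟨ε/2, by positivity, ?_⟩
    set r := ε/2 with hrdef
    set S := K ∩ Metric.closedBall p r with hS
    set q : E4 → E4 := fun v => v - (inner ℝ e v : ℝ) • e with hq
    have hqlin : ∀ x y : E4, q y - q x = q (y - x) := by
      intro x y
      simp only [hq, inner_sub_right, sub_smul]
      abel
    have hqorth : ∀ v : E4, (inner ℝ e (q v) : ℝ) = 0 := by
      intro v
      simp only [hq, inner_sub_right, real_inner_smul_right,
        real_inner_self_eq_norm_sq, hnorme]
      ring
    have hconv : Convex ℝ (Metric.closedBall p r) := convex_closedBall p r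
    have hsub : Metric.closedBall p r ⊆ Metric.ball p ε := by
      intro z hz
      rw [Metric.mem_closedBall] at hz
      rw [Metric.mem_ball]
      calc dist z p ≤ ε/2 := hz
        _ < ε := by linarith
    have hFdiff : ∀ z ∈ Metric.closedBall p r, DifferentiableAt ℝ (fun w => f w - L w) z :=
      fun z _ => (hfd z).sub L.differentiableAt
    have hFbound : ∀ z ∈ Metric.closedBall p r, ‖fderiv ℝ (fun w => f w - L w) z‖ ≤ m/4 := by
      intro z hz
      rw [fderiv_fun_sub (hfd z) L.differentiableAt, ContinuousLinearMap.fderiv]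
      exact le_of_lt (hball z (hsub hz))
    have hstar : ∀ x ∈ S, ∀ y ∈ S, ‖y - x‖ ≤ 2 * ‖q y - q x‖ := by
      intro x hx y hy
      have hmvt := hconv.norm_image_sub_le_of_norm_fderiv_le hFdiff hFbound hx.2 hy.2
      have hfx : f x = 0 := hfzero x hx.1
      have hfy : f y = 0 := hfzero y hy.1
      have hFyx : (f y - L y) - (f x - L x) = -(L (y - x)) := by
        rw [map_sub]; rw [hfx, hfy]; ring
      rw [hFyx, norm_neg] at hmvt
      set v := y - x with hv
      have hinner : |(inner ℝ e v : ℝ)| ≤ ‖v‖/4 := by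
        have hL4 : |(inner ℝ g v : ℝ)| ≤ m/4 * ‖v‖ := by
          rw [← hLg]
          simpa [Real.norm_eq_abs] using hmvt
        have hsplit : (inner ℝ g v : ℝ) = m * (inner ℝ e v : ℝ) := by
          conv_lhs => rw [hge']
          rw [real_inner_smul_left]
        rw [hsplit, abs_mul, abs_of_pos hm0] at hL4
        nlinarith
      have hdecomp : v = (inner ℝ e v : ℝ) • e + q v := by
        simp only [hq]; abel
      have horth : (inner ℝ ((inner ℝ e v : ℝ) • e) (q v) : ℝ) = 0 := by
        rw [real_inner_smul_left]
        rw [hqorth v, mul_zero]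
      have hpyth : ‖v‖^2 = (inner ℝ e v : ℝ)^2 + ‖q v‖^2 := by
        conv_lhs => rw [hdecomp]
        rw [norm_add_sq_real, horth, norm_smul, hnorme, Real.norm_eq_abs]
        rw [mul_one, sq_abs]
        ring
      have h2q : ‖v‖ ≤ 2 * ‖q v‖ := by
        nlinarith [norm_nonneg v, norm_nonneg (q v), sq_abs (inner ℝ e v : ℝ), abs_nonneg (inner ℝ e v : ℝ)]
      rw [hqlin x y]
      exact h2q
    set T := q '' S with hT
    set ψ := Function.invFunOn q S with hψ
    have hψS : ∀ a ∈ T, ψ a ∈ S ∧ q (ψ a) = a := by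
      rintro a ⟨x, hx, rfl⟩
      exact ⟨Function.invFunOn_mem ⟨x, hx, rfl⟩, Function.invFunOn_eq ⟨x, hx, rfl⟩⟩
    have hlipψ : LipschitzOnWith 2 ψ T := by
      rw [lipschitzOnWith_iff_dist_le_mul]
      intro a ha b hb
      obtain ⟨haS, haq⟩ := hψS a ha
      obtain ⟨hbS, hbq⟩ := hψS b hb
      rw [dist_eq_norm, dist_eq_norm]
      have hst := hstar (ψ b) hbS (ψ a) haS
      rw [hqlin (ψ b) (ψ a)] at hst
      have : q (ψ a) - q (ψ b) = a - b := by rw [haq, hbq]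
      rw [← hqlin (ψ b) (ψ a), this] at hst
      simpa using hst
    have hSsub : S ⊆ ψ '' T := by
      intro x hx
      have hqx : q x ∈ T := ⟨x, hx, rfl⟩
      obtain ⟨hmem, heq⟩ := hψS _ hqx
      have hst := hstar x hx (ψ (q x)) hmem
      rw [heq, sub_self, norm_zero, mul_zero] at hst
      have : ψ (q x) = x := by
        have h0 : ‖ψ (q x) - x‖ = 0 := le_antisymm hst (norm_nonneg _)
        have h1 := norm_eq_zero.mp h0
        exact sub_eq_zero.mp h1
      exact ⟨q x, hqx, this⟩
    have h8 : μH[3] S ≤ (2:ℝ≥0∞)^(3:ℝ) * μH[3] T := by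
      calc μH[3] S ≤ μH[3] (ψ '' T) := measure_mono hSsub
        _ ≤ (2:ℝ≥0)^(3:ℝ) * μH[3] T :=
          LipschitzOnWith.hausdorffMeasure_image_le hlipψ (by norm_num)
        _ = (2:ℝ≥0∞)^(3:ℝ) * μH[3] T := by
          norm_num [ENNReal.coe_rpow_of_ne_zero]
    set W := (Submodule.span ℝ {g})ᗮ with hW
    have hWrank : Module.finrank ℝ W = 3 := by
      have h1 := Submodule.finrank_add_finrank_orthogonal (Submodule.span ℝ {g})
      rw [finrank_span_singleton hg0] at h1
      have h2 : Module.finrank ℝ E4 = 4 := finrank_euclideanSpace_fin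
      rw [h2] at h1
      rw [hW]
      omega
    set R := 2*(‖p‖ + r) with hR
    have hTsub : T ⊆ (W : Set E4) ∩ Metric.closedBall 0 R := by
      rintro a ⟨x, hx, rfl⟩
      constructor
      · rw [hW]
        rw [SetLike.mem_coe, Submodule.mem_orthogonal_singleton_iff_inner_right]
        conv_lhs => rw [hge']
        rw [real_inner_smul_left, hqorth x, mul_zero]
      · rw [mem_closedBall_zero_iff]
        have hx' : ‖x‖ ≤ ‖p‖ + r := by
          have hxb := hx.2
          rw [Metric.mem_closedBall, dist_eq_norm] at hxb
          calc ‖x‖ ≤ ‖p‖ + ‖x - p‖ := norm_le_norm_add_norm_sub' x p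
            _ ≤ ‖p‖ + r := by linarith
        have hqx : ‖q x‖ ≤ 2 * ‖x‖ := by
          calc ‖q x‖ ≤ ‖x‖ + ‖(inner ℝ e x : ℝ) • e‖ := norm_sub_le _ _
            _ = ‖x‖ + |(inner ℝ e x : ℝ)| := by
              rw [norm_smul, hnorme, Real.norm_eq_abs, mul_one]
            _ ≤ ‖x‖ + ‖e‖ * ‖x‖ := add_le_add_right (abs_real_inner_le_norm e x) _
            _ = 2 * ‖x‖ := by rw [hnorme]; ring
        have hp0 : 0 ≤ ‖p‖ := norm_nonneg p
        have hr0 : 0 ≤ r := by rw [hrdef]; positivity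
        calc ‖q x‖ ≤ 2 * ‖x‖ := hqx
          _ ≤ 2 * (‖p‖ + r) := by linarith
    calc μH[3] (K ∩ Metric.closedBall p r) ≤ (2:ℝ≥0∞)^(3:ℝ) * μH[3] T := h8
      _ ≤ (2:ℝ≥0∞)^(3:ℝ) * μH[3] ((W : Set E4) ∩ Metric.closedBall 0 R) :=
        mul_le_mul' le_rfl (measure_mono hTsub)
      _ < ⊤ := ENNReal.mul_lt_top
          (ENNReal.rpow_lt_top_of_nonneg (by norm_num) (by norm_num))
          (finite_hausdorff_of_submodule W hWrank R)
  choose! r hr hμ using key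
  obtain ⟨t, htK, hcover⟩ := hKcompact.elim_nhds_subcover (fun p => Metric.ball p (r p))
    (fun p hp => Metric.ball_mem_nhds _ (hr p hp))
  have hsub2 : K ⊆ ⋃ p ∈ t, K ∩ Metric.closedBall p (r p) := by
    intro x hx
    obtain ⟨p, hpt, hxp⟩ : ∃ p ∈ t, x ∈ Metric.ball p (r p) := by
      simpa using hcover hx
    exact Set.mem_biUnion hpt ⟨hx, Metric.ball_subset_closedBall hxp⟩
  calc μH[3] K ≤ μH[3] (⋃ p ∈ t, K ∩ Metric.closedBall p (r p)) := measure_mono hsub2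
    _ ≤ ∑ p ∈ t, μH[3] (K ∩ Metric.closedBall p (r p)) := measure_biUnion_finset_le _ _
    _ < ⊤ := ENNReal.sum_lt_top.mpr (fun p hpt => hμ p (htK p hpt))

/-- Scaling a member of `H` by a factor `t` with `t² ≤ 1` stays in `H`. -/
lemma memH_smul (D : SmoothDomain) (u : E4 → ℝ) (h : memH D u) (t : ℝ) (ht : t^2 ≤ 1) :
    memH D (fun x => t * u x) := by
  obtain ⟨⟨U, hUo, hUc, hU2⟩, hint, hmean, hneu⟩ := h
  have hU2' : ContDiffOn ℝ ((2:ℕ) : ℕ∞) u U := by exact_mod_cast hU2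
  have hlapeq : ∀ x ∈ D.Ω, lap (fun y => t * u y) x = t * lap u x := by
    intro x hx
    have hxU : x ∈ U := hUc (subset_closure hx)
    have hit : iteratedFDeriv ℝ 2 (fun y => t * u y) x = t • iteratedFDeriv ℝ 2 u x := by
      have h1 := iteratedFDerivWithin_const_smul_apply (i := 2) (a := t)
        (hU2 x hxU) hUo.uniqueDiffOn hxU
      have h2 : (fun y => t * u y) = t • u := by
        funext y; simp [smul_eq_mul]
      rw [h2]
      rw [← iteratedFDerivWithin_of_isOpen 2 hUo hxU,
        ← iteratedFDerivWithin_of_isOpen (f := u) 2 hUo hxU]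
      exact h1
    simp only [lap, hit, ContinuousMultilinearMap.smul_apply, smul_eq_mul]
    rw [Finset.mul_sum]
  refine ⟨⟨U, hUo, hUc, contDiffOn_const.mul hU2⟩, ?_, ?_, ?_⟩
  · have heq : ∫ x in D.Ω, (lap (fun y => t * u y) x) ^ 2
        = ∫ x in D.Ω, t^2 * (lap u x) ^ 2 := by
      apply setIntegral_congr_fun D.isOpen.measurableSet
      intro x hx
      simp only
      rw [hlapeq x hx]; ring
    have hpull : ∫ x in D.Ω, t^2 * (lap u x) ^ 2 = t^2 * ∫ x in D.Ω, (lap u x) ^ 2 := by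
      simpa [smul_eq_mul] using
        integral_smul (μ := volume.restrict D.Ω) (t^2) (fun x => (lap u x)^2)
    have h0 : 0 ≤ ∫ x in D.Ω, (lap u x) ^ 2 := integral_nonneg (fun x => sq_nonneg _)
    rw [heq, hpull]
    nlinarith
  · have hpull : ∫ x in D.Ω, t * u x = t * ∫ x in D.Ω, u x := by
      simpa [smul_eq_mul] using integral_smul (μ := volume.restrict D.Ω) t u
    rw [hpull, hmean, mul_zero]
  · intro x hx
    have hxU : x ∈ U := hUc (frontier_subset_closure hx)
    have hdx : DifferentiableAt ℝ u x :=
      (hU2.contDiffAt (hUo.mem_nhds hxU)).differentiableAt (by norm_num)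
    have hgrad : gradient (fun y => t * u y) x = t • gradient u x := by
      show (InnerProductSpace.toDual ℝ E4).symm (fderiv ℝ (fun y => t * u y) x)
        = t • (InnerProductSpace.toDual ℝ E4).symm (fderiv ℝ u x)
      rw [fderiv_const_mul hdx t, _root_.map_smul]
    show inner ℝ (gradient (fun y => t * u y) x) (D.ν x) = (0:ℝ)
    rw [hgrad, real_inner_smul_left]
    have := hneu x hx
    show t * inner ℝ (gradient u x) (D.ν x) = 0
    rw [show (inner ℝ (gradient u x) (D.ν x) : ℝ) = 0 from this, mul_zero]

set_option maxHeartbeats 2000000 in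
/-- boundedness+continuity implies integrability on the boundary -/
lemma integrableOn_frontier (D : SmoothDomain) {g : E4 → ℝ} {M : ℝ}
    (hcont : ContinuousOn g (frontier D.Ω)) (hbd : ∀ x ∈ frontier D.Ω, ‖g x‖ ≤ M) :
    IntegrableOn g (frontier D.Ω) μH[3] := by
  have hFmeas : MeasurableSet (frontier D.Ω) := isClosed_frontier.measurableSet
  have h1 : μH[3] (frontier D.Ω) ≠ ⊤ := (frontier_hausdorff_finite D).ne
  have h2 : AEStronglyMeasurable g (μH[3].restrict (frontier D.Ω)) :=
    hcont.aestronglyMeasurable hFmeas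
  have h3 : ∀ᵐ x ∂(μH[3].restrict (frontier D.Ω)), ‖g x‖ ≤ M :=
    (ae_restrict_iff' hFmeas).2 (ae_of_all _ hbd)
  have hfin : IsFiniteMeasure (μH[3].restrict (frontier D.Ω)) :=
    ⟨by rwa [Measure.restrict_apply_univ, lt_top_iff_ne_top]⟩
  have hconst : Integrable (fun _ : E4 => M) (μH[3].restrict (frontier D.Ω)) :=
    integrable_const M
  exact hconst.mono' h2 h3

set_option maxHeartbeats 2000000 in

set_option maxHeartbeats 2000000 in
/-- **Fast decay of the blow-up scale (Lemma 3.2).** With `r_k` defined by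
`r_k³ = (−λ_k/c_k²) exp(−α_k c_k²)`, for every `γ < 12π²` one has
`r_k³ e^{γ c_k²} → 0` as `k → ∞`; indeed `c_k² r_k³ e^{γ c_k²}` remains bounded. -/
theorem rk_fast_decay (D : SmoothDomain) (B : Blowup D) :
    ∀ γ : ℝ, γ < 12 * π ^ 2 →
      Filter.Tendsto (fun k => (rk B k) ^ 3 * Real.exp (γ * (B.c k) ^ 2))
        Filter.atTop (nhds 0) ∧
      ∃ C : ℝ, ∀ k, (B.c k) ^ 2 * (rk B k) ^ 3 * Real.exp (γ * (B.c k) ^ 2) ≤ C := by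
  intro γ hγ
  have hπ : (0:ℝ) < 12 * π ^ 2 := by positivity
  -- boundary and measurability facts
  set F := frontier D.Ω with hF
  have hFmeas : MeasurableSet F := isClosed_frontier.measurableSet
  -- continuity of each u k near the boundary
  have hucont : ∀ k, ContinuousOn (B.u k) F := by
    intro k
    obtain ⟨U, hUo, hUc, hU2⟩ := (B.mem k).1
    exact (hU2.continuousOn).mono ((hF ▸ frontier_subset_closure).trans hUc)
  -- c k is nonnegative
  have hc0 : ∀ k, 0 ≤ B.c k := by
    intro k
    have h1 := B.c_max k (B.xk k) (B.xk_mem k)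
    rw [← B.c_def k] at h1
    exact (abs_nonneg _).trans h1
  -- -lam k is nonnegative
  have hlam0 : ∀ k, 0 ≤ -B.lam k := by
    intro k
    rw [B.lam_def k, neg_neg]
    exact integral_nonneg (fun x => by positivity)
  -- X k := rk³
  set X : ℕ → ℝ := fun k => (-B.lam k / (B.c k) ^ 2) * Real.exp (-(B.α k) * (B.c k) ^ 2)
    with hX
  have hX0 : ∀ k, 0 ≤ X k := fun k => by
    have := hlam0 k
    positivity
  have hrk3 : ∀ k, (rk B k) ^ 3 = X k := by
    intro k
    rw [rk, ← Real.rpow_natCast ((X k) ^ ((1:ℝ)/3)) 3, ← Real.rpow_mul (hX0 k)]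
    norm_num
  -- the auxiliary exponent γ'
  set γ' : ℝ := (max γ 0 + 12 * π ^ 2) / 2 with hγ'
  have hγ'pos : 0 < γ' := by
    have : (0:ℝ) ≤ max γ 0 := le_max_right _ _
    rw [hγ']; positivity
  have hγ'lt : γ' < 12 * π ^ 2 := by
    have h1 : max γ 0 < 12 * π ^ 2 := max_lt hγ hπ
    rw [hγ']; linarith
  have hγγ' : γ < γ' := by
    have h1 : γ ≤ max γ 0 := le_max_left _ _
    rw [hγ']; linarith
  -- pick j₀ with α j₀ > γ'
  obtain ⟨j₀, hj₀⟩ := (B.α_lim.eventually (eventually_gt_nhds hγ'lt)).exists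
  have hα0 : 0 < B.α j₀ := lt_trans hγ'pos hj₀
  set t : ℝ := Real.sqrt (γ' / B.α j₀) with htdef
  have ht2 : t ^ 2 = γ' / B.α j₀ := Real.sq_sqrt (by positivity)
  have htle : t ^ 2 ≤ 1 := by
    rw [ht2]
    exact div_le_one_of_le₀ (le_of_lt hj₀) (le_of_lt hα0)
  -- the uniform bound M
  set M : ℝ := bInt D (fun x => Real.exp (B.α j₀ * (B.u j₀ x) ^ 2)) with hM
  have claim1 : ∀ k, (∫ x in F, Real.exp (γ' * (B.u k x) ^ 2) ∂μH[3]) ≤ M := by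
    intro k
    have hmax := B.max j₀ (fun x => t * B.u k x) (memH_smul D (B.u k) (B.mem k) t htle)
    have heq : (fun x => Real.exp (B.α j₀ * (t * B.u k x) ^ 2))
        = fun x => Real.exp (γ' * (B.u k x) ^ 2) := by
      funext x
      congr 1
      rw [mul_pow, ht2]
      field_simp
    rw [heq] at hmax
    exact hmax
  -- key estimate: for large k, −λ_k is controlled
  have hkey : ∀ k, γ' ≤ B.α k → 1 ≤ B.c k →
      -B.lam k ≤ (B.c k ^ 2 * Real.exp ((B.α k - γ') * B.c k ^ 2)) * M := by
    intro k hαk hck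
    set Kk : ℝ := B.c k ^ 2 * Real.exp ((B.α k - γ') * B.c k ^ 2) with hKk
    have hKk0 : 0 ≤ Kk := by positivity
    have hgc : ContinuousOn (fun x => Real.exp (γ' * (B.u k x)^2)) F :=
      Real.continuous_exp.comp_continuousOn (continuousOn_const.mul ((hucont k).pow 2))
    have hsq : ∀ x ∈ F, (B.u k x)^2 ≤ (B.c k)^2 := by
      intro x hx
      have h1 := B.c_max k x (frontier_subset_closure hx)
      calc (B.u k x)^2 = |B.u k x|^2 := (sq_abs _).symm
        _ ≤ (B.c k)^2 := by nlinarith [abs_nonneg (B.u k x)]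
    have hg_int : IntegrableOn (fun x => Real.exp (γ' * (B.u k x)^2)) F μH[3] := by
      apply integrableOn_frontier D hgc (M := Real.exp (γ' * (B.c k)^2))
      intro x hx
      rw [Real.norm_eq_abs, abs_of_pos (Real.exp_pos _), Real.exp_le_exp]
      exact mul_le_mul_of_nonneg_left (hsq x hx) (le_of_lt hγ'pos)
    have hhc : ContinuousOn (fun x => (B.u k x)^2 * Real.exp (B.α k * (B.u k x)^2)) F :=
      ((hucont k).pow 2).mul
        (Real.continuous_exp.comp_continuousOn (continuousOn_const.mul ((hucont k).pow 2)))
    have hα_nonneg : 0 ≤ B.α k := le_trans (le_of_lt hγ'pos) hαk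
    have hh_int : IntegrableOn (fun x => (B.u k x)^2 * Real.exp (B.α k * (B.u k x)^2)) F μH[3] := by
      apply integrableOn_frontier D hhc (M := (B.c k)^2 * Real.exp (B.α k * (B.c k)^2))
      intro x hx
      rw [Real.norm_eq_abs, abs_of_nonneg (by positivity)]
      apply mul_le_mul (hsq x hx) _ (le_of_lt (Real.exp_pos _)) (by positivity)
      rw [Real.exp_le_exp]
      exact mul_le_mul_of_nonneg_left (hsq x hx) hα_nonneg
    have hpoint : ∀ x ∈ F, (B.u k x)^2 * Real.exp (B.α k * (B.u k x)^2)
        ≤ Kk * Real.exp (γ' * (B.u k x)^2) := by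
      intro x hx
      have hsplit : Real.exp (B.α k * (B.u k x)^2)
          = Real.exp ((B.α k - γ') * (B.u k x)^2) * Real.exp (γ' * (B.u k x)^2) := by
        rw [← Real.exp_add]; congr 1; ring
      rw [hsplit, hKk, ← mul_assoc]
      apply mul_le_mul _ le_rfl (le_of_lt (Real.exp_pos _)) (by positivity)
      apply mul_le_mul (hsq x hx) _ (le_of_lt (Real.exp_pos _)) (by positivity)
      rw [Real.exp_le_exp]
      exact mul_le_mul_of_nonneg_left (hsq x hx) (by linarith)
    have hmono : (∫ x in F, (B.u k x)^2 * Real.exp (B.α k * (B.u k x)^2) ∂μH[3])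
        ≤ ∫ x in F, Kk * Real.exp (γ' * (B.u k x)^2) ∂μH[3] :=
      setIntegral_mono_on hh_int (hg_int.const_mul Kk) hFmeas hpoint
    have hpull : (∫ x in F, Kk * Real.exp (γ' * (B.u k x)^2) ∂μH[3])
        = Kk * ∫ x in F, Real.exp (γ' * (B.u k x)^2) ∂μH[3] := by
      simpa [smul_eq_mul] using
        integral_smul (μ := μH[3].restrict F) Kk (fun x => Real.exp (γ' * (B.u k x)^2))
    have hlamval : -B.lam k
        = ∫ x in F, (B.u k x)^2 * Real.exp (B.α k * (B.u k x)^2) ∂μH[3] := by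
      rw [B.lam_def k, neg_neg]; rfl
    rw [hlamval]
    calc (∫ x in F, (B.u k x)^2 * Real.exp (B.α k * (B.u k x)^2) ∂μH[3])
        ≤ Kk * ∫ x in F, Real.exp (γ' * (B.u k x)^2) ∂μH[3] := by rw [← hpull]; exact hmono
      _ ≤ Kk * M := mul_le_mul_of_nonneg_left (claim1 k) hKk0
  -- the dominating sequence B2 and its convergence to 0
  set δ : ℝ := γ' - γ with hδ
  have hδ0 : 0 < δ := by rw [hδ]; linarith
  set B2 : ℕ → ℝ := fun k => (M / δ) * ((δ * B.c k ^ 2) ^ 1 * Real.exp (-(δ * B.c k ^ 2)))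
    with hB2
  have hB2eq : ∀ k, B2 k = M * (B.c k ^ 2 * Real.exp ((γ - γ') * B.c k ^ 2)) := by
    intro k
    rw [hB2]
    simp only [pow_one]
    rw [show (γ - γ') * B.c k ^ 2 = -(δ * B.c k ^ 2) by rw [hδ]; ring]
    field_simp
  have hc2 : Tendsto (fun k => δ * B.c k ^ 2) atTop atTop := by
    apply Tendsto.const_mul_atTop hδ0
    apply tendsto_atTop_mono' atTop _ B.c_blowup
    filter_upwards [B.c_blowup.eventually_ge_atTop 1] with k hk
    nlinarith
  have hB2tend : Tendsto B2 atTop (nhds 0) := by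
    have h2 := (tendsto_pow_mul_exp_neg_atTop_nhds_zero 1).comp hc2
    have h3 := h2.const_mul (M / δ)
    rw [mul_zero] at h3
    exact h3
  -- nonnegativity of the two quantities
  have hrk30 : ∀ k, 0 ≤ (rk B k)^3 := fun k => by rw [hrk3 k]; exact hX0 k
  have hterm1_nonneg : ∀ k, 0 ≤ (rk B k)^3 * Real.exp (γ * B.c k ^ 2) := fun k => by
    have := hrk30 k; positivity
  have hterm2_nonneg : ∀ k, 0 ≤ B.c k ^ 2 * (rk B k)^3 * Real.exp (γ * B.c k ^ 2) := fun k => by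
    have := hrk30 k; positivity
  -- eventual domination
  have hev2 : ∀ᶠ k in atTop,
      B.c k ^ 2 * (rk B k)^3 * Real.exp (γ * B.c k ^ 2) ≤ B2 k := by
    filter_upwards [B.α_lim.eventually (eventually_ge_nhds hγ'lt),
      B.c_blowup.eventually_ge_atTop 1] with k hαk hck
    have hkey' := hkey k hαk hck
    have hc2pos : (0:ℝ) < B.c k ^ 2 := by nlinarith
    have hterm2eq : B.c k ^ 2 * (rk B k)^3 * Real.exp (γ * B.c k ^ 2)
        = (-B.lam k) * Real.exp ((γ - B.α k) * B.c k ^ 2) := by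
      rw [hrk3 k, hX]
      rw [show Real.exp ((γ - B.α k) * B.c k ^ 2)
        = Real.exp (-(B.α k) * B.c k ^ 2) * Real.exp (γ * B.c k ^ 2) by
          rw [← Real.exp_add]; congr 1; ring]
      field_simp
    rw [hterm2eq, hB2eq k]
    have hE : (0:ℝ) < Real.exp ((γ - B.α k) * B.c k ^ 2) := Real.exp_pos _
    have h4 : (-B.lam k) * Real.exp ((γ - B.α k) * B.c k ^ 2)
        ≤ (B.c k ^ 2 * Real.exp ((B.α k - γ') * B.c k ^ 2) * M)
          * Real.exp ((γ - B.α k) * B.c k ^ 2) :=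
      mul_le_mul_of_nonneg_right hkey' (le_of_lt hE)
    have hcomb : Real.exp ((B.α k - γ') * B.c k ^ 2) * Real.exp ((γ - B.α k) * B.c k ^ 2)
        = Real.exp ((γ - γ') * B.c k ^ 2) := by
      rw [← Real.exp_add]; congr 1; ring
    have h5 : (B.c k ^ 2 * Real.exp ((B.α k - γ') * B.c k ^ 2) * M)
          * Real.exp ((γ - B.α k) * B.c k ^ 2)
        = M * (B.c k ^ 2 * Real.exp ((γ - γ') * B.c k ^ 2)) := by
      linear_combination (M * B.c k ^ 2) * hcomb
    rw [h5] at h4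
    exact h4
  have hev1 : ∀ᶠ k in atTop, (rk B k)^3 * Real.exp (γ * B.c k ^ 2) ≤ B2 k := by
    filter_upwards [hev2, B.c_blowup.eventually_ge_atTop 1] with k h2 hck
    have h1 := hterm1_nonneg k
    have hc2' : 1 ≤ B.c k ^ 2 := by nlinarith
    have h3 : (rk B k)^3 * Real.exp (γ * B.c k ^ 2)
        ≤ B.c k ^ 2 * ((rk B k)^3 * Real.exp (γ * B.c k ^ 2)) :=
      le_mul_of_one_le_left h1 hc2'
    have h4 : B.c k ^ 2 * ((rk B k)^3 * Real.exp (γ * B.c k ^ 2))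
        = B.c k ^ 2 * (rk B k)^3 * Real.exp (γ * B.c k ^ 2) := by ring
    linarith
  have htend2 : Tendsto (fun k => B.c k ^ 2 * (rk B k)^3 * Real.exp (γ * B.c k ^ 2))
      atTop (nhds 0) :=
    tendsto_of_tendsto_of_tendsto_of_le_of_le' tendsto_const_nhds hB2tend
      (Eventually.of_forall hterm2_nonneg) hev2
  have htend1 : Tendsto (fun k => (rk B k)^3 * Real.exp (γ * B.c k ^ 2))
      atTop (nhds 0) :=
    tendsto_of_tendsto_of_tendsto_of_le_of_le' tendsto_const_nhds hB2tend
      (Eventually.of_forall hterm1_nonneg) hev1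
  refine ⟨htend1, ?_⟩
  obtain ⟨C, hC⟩ := htend2.bddAbove_range
  exact ⟨C, fun k => hC (Set.mem_range_self k)⟩
end
end

section
/- The explicit function ψ(x',t) = −(1/(8π²)) log((1+(π/2)^{2/3} t)² + (π/2)^{4/3}|x'|²) + (1/(2^{8/3} π^{4/3})) · t/((1+(π/2)^{2/3} t)² + (π/2)^{4/3}|x'|²) on the closed half space ℝ⁴₊ = {(x',t) : x' ∈ ℝ³, t ≥ 0} satisfies: Δ²ψ = 0 in the open half space {t > 0}; ∂ψ/∂t(x',0) = 0 for all x' ∈ ℝ³; ∂(Δψ)/∂t(x',0) = exp(24π² ψ(x',0)) for all x' ∈ ℝ³; and ψ(x',t) ≤ ψ(0,0) = 0 for all (x',t), i.e. sup ψ = ψ(0) = 0. -/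
open MeasureTheory Real Filter Metric
open scoped Real ENNReal Topology NNReal

noncomputable section

/-- The quantity `(1+(π/2)^{2/3} t)² + (π/2)^{4/3}|x'|²`, for `x = (x', t) ∈ ℝ³ × ℝ = ℝ⁴`. -/
def profileDen (x : E4) : ℝ :=
  (1 + (π / 2) ^ ((2 : ℝ) / 3) * x 3) ^ 2
    + (π / 2) ^ ((4 : ℝ) / 3) * ∑ i : Fin 3, (x (Fin.castSucc i)) ^ 2

/-- The explicit blow-up profile
`ψ(x',t) = −(1/(8π²)) log((1+(π/2)^{2/3}t)² + (π/2)^{4/3}|x'|²)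
  + (1/(2^{8/3}π^{4/3})) t/((1+(π/2)^{2/3}t)² + (π/2)^{4/3}|x'|²)`. -/
def profileFn (x : E4) : ℝ :=
  -(1 / (8 * π ^ 2)) * Real.log (profileDen x)
    + (1 / ((2 : ℝ) ^ ((8 : ℝ) / 3) * π ^ ((4 : ℝ) / 3))) * (x 3 / profileDen x)


namespace ProfileAux

open scoped RealInnerProductSpace

def cA : ℝ := (π/2) ^ ((2:ℝ)/3)
def c1 : ℝ := 1 / (8 * π ^ 2)
def c2 : ℝ := 1 / ((2 : ℝ) ^ ((8 : ℝ) / 3) * π ^ ((4 : ℝ) / 3))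
def e3 : E4 := EuclideanSpace.single 3 1
def Dn (x : E4) : ℝ := 1 + 2*cA*(x 3) + cA^2*‖x‖^2
def Gr (x : E4) : E4 := (2*cA) • e3 + (2*cA^2) • x
def Fgen (p q r : ℝ) (n : ℕ) (x : E4) : ℝ := (p + q * x 3 + r * Dn x) / Dn x ^ n

lemma cA_pos : 0 < cA := Real.rpow_pos_of_pos (by positivity) _

lemma c1_pos : 0 < c1 := by rw [c1]; positivity

lemma norm_sq_eq (x : E4) : ‖x‖^2 = ∑ i, x i ^ 2 := by
  rw [EuclideanSpace.norm_eq, Real.sq_sqrt (by positivity)]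
  simp [sq_abs]

lemma cA_sq : cA^2 = (π/2) ^ ((4:ℝ)/3) := by
  rw [cA, ← Real.rpow_natCast ((π/2) ^ ((2:ℝ)/3)) 2, ← Real.rpow_mul (by positivity)]
  norm_num

lemma cA_cube : cA^3 = π^2/4 := by
  rw [cA, ← Real.rpow_natCast ((π/2) ^ ((2:ℝ)/3)) 3, ← Real.rpow_mul (by positivity)]
  norm_num [div_pow]

lemma h32 : 32 * cA^3 * c1 = 1 := by
  rw [cA_cube, c1]; have := Real.pi_ne_zero; field_simp; ring

lemma h16 : 16 * cA^2 * c2 = 1 := by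
  rw [cA_sq, c2, Real.div_rpow (by positivity) (by norm_num)]
  have h2 : (2:ℝ) ^ ((4:ℝ)/3) * (2:ℝ) ^ ((8:ℝ)/3) = 16 := by
    rw [← Real.rpow_add (by norm_num)]
    norm_num
  have hp : π ^ ((4:ℝ)/3) ≠ 0 := by positivity
  have h2' : (2:ℝ) ^ ((4:ℝ)/3) ≠ 0 := by positivity
  field_simp
  linear_combination (-1:ℝ) * h2

lemma hc2 : c2 = 2 * cA * c1 := by
  have h1 := h32; have h2 := h16
  have hA := cA_pos.ne'
  have : c2 = 1 / (16 * cA^2) := by field_simp at h2 ⊢; linarith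
  have : c1 = 1 / (32 * cA^3) := by field_simp at h1 ⊢; linarith
  rw [this, ‹c2 = _›]
  field_simp
  ring

lemma sum3_eq (x : E4) : ∑ i : Fin 3, (x (Fin.castSucc i)) ^ 2 = x 0^2 + x 1^2 + x 2^2 := by
  have ha : Fin.castSucc (0 : Fin 3) = (0 : Fin 4) := rfl
  have hb : Fin.castSucc (1 : Fin 3) = (1 : Fin 4) := rfl
  have hc : Fin.castSucc (2 : Fin 3) = (2 : Fin 4) := rfl
  rw [Fin.sum_univ_three, ha, hb, hc]

lemma profileDen_eq (x : E4) : profileDen x = Dn x := by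
  rw [profileDen, Dn, ← cA_sq, ← cA, norm_sq_eq, Fin.sum_univ_four, sum3_eq]
  ring

lemma profileFn_eq (x : E4) : profileFn x = -c1 * Real.log (Dn x) + c2 * (x 3 / Dn x) := by
  rw [profileFn, profileDen_eq, c1, c2]

lemma Dn_pos (x : E4) (hx : 0 ≤ x 3) : 0 < Dn x := by
  rw [← profileDen_eq, profileDen]
  have h1 : (1:ℝ) ≤ (1 + (π / 2) ^ ((2 : ℝ) / 3) * x 3) := by
    nlinarith [Real.rpow_pos_of_pos (show (0:ℝ) < π/2 by positivity) ((2:ℝ)/3)]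
  have h2 : (0:ℝ) ≤ (π / 2) ^ ((4 : ℝ) / 3) * ∑ i : Fin 3, (x (Fin.castSucc i)) ^ 2 := by
    positivity
  nlinarith

lemma e3_apply (i : Fin 4) : e3 i = if i = 3 then 1 else 0 := by
  simp [e3, EuclideanSpace.single_apply]

lemma e3_0 : e3 0 = 0 := by simp [e3, EuclideanSpace.single_apply]
lemma e3_1 : e3 1 = 0 := by simp [e3, EuclideanSpace.single_apply]
lemma e3_2 : e3 2 = 0 := by simp [e3, EuclideanSpace.single_apply]
lemma e3_3 : e3 3 = 1 := by simp [e3, EuclideanSpace.single_apply]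

lemma Gr_coord (x : E4) (i : Fin 4) :
    Gr x i = 2*cA* e3 i + 2*cA^2 * x i := by
  simp [Gr, mul_assoc]

lemma Gr_3 (x : E4) : Gr x 3 = 2*cA + 2*cA^2 * x 3 := by rw [Gr_coord, e3_3]; ring

lemma inner_e3 (w : E4) : ⟪w, e3⟫ = w 3 := by
  rw [real_inner_comm]; simp [e3, EuclideanSpace.inner_single_left]

lemma hasFDerivAt_x3 (y : E4) :
    HasFDerivAt (fun z : E4 => z 3) (innerSL ℝ e3) y := by
  have h := (innerSL ℝ e3).hasFDerivAt (x := y)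
  convert h using 1
  funext z
  simp [e3, EuclideanSpace.inner_single_left]

lemma hasFDerivAt_Dn (y : E4) :
    HasFDerivAt Dn (innerSL ℝ (Gr y)) y := by
  have h1 : HasFDerivAt (fun z : E4 => ‖z‖^2) (2 • (innerSL ℝ y)) y := by
    simpa using (hasFDerivAt_id y).norm_sq
  have h := ((hasFDerivAt_const (1:ℝ) y).add
      (((hasFDerivAt_x3 y).const_mul (2*cA)))).add (h1.const_mul (cA^2))
  refine h.congr_fderiv ?_
  ext v
  simp [Gr, inner_add_left, real_inner_smul_left, two_smul, inner_add_left]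
  ring

lemma genHasF (p q r : ℝ) (n : ℕ) (y : E4) (hy : Dn y ≠ 0) :
    HasFDerivAt (Fgen p q r (n+1))
      (innerSL ℝ ((Fgen (-(n+1:ℝ)*p) (-(n+1:ℝ)*q) (-(n:ℝ)*r) (n+2) y) • Gr y
        + (Fgen q 0 0 (n+1) y) • e3)) y := by
  have hN : HasFDerivAt (fun z : E4 => p + q * z 3 + r * Dn z)
      (q • innerSL ℝ e3 + r • innerSL ℝ (Gr y)) y := by
    have h := ((hasFDerivAt_const p y).add
        ((hasFDerivAt_x3 y).const_mul q)).add ((hasFDerivAt_Dn y).const_mul r)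
    convert h using 1
    all_goals try (ext v; simp [ContinuousLinearMap.smul_apply]; try ring)
  have hzp : HasFDerivAt (fun z : E4 => Dn z ^ (-(n+1:ℤ)))
      ((((-(n+1:ℤ) : ℤ) : ℝ) * Dn y ^ ((-(n+1:ℤ)) - 1)) • innerSL ℝ (Gr y)) y :=
    (hasDerivAt_zpow (-(n+1:ℤ)) (Dn y) (Or.inl hy)).comp_hasFDerivAt y (hasFDerivAt_Dn y)
  have hmul := hN.mul hzp
  have hfun : (Fgen p q r (n+1)) =
      (fun z => (p + q * z 3 + r * Dn z) * Dn z ^ (-(n+1:ℤ))) := by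
    funext z
    rw [Fgen, div_eq_mul_inv, ← zpow_natCast (Dn z), ← zpow_neg]
    norm_num
  rw [hfun]
  refine hmul.congr_fderiv ?_
  ext v
  have h1 : Dn y ^ (-(n+1:ℤ)) = (Dn y ^ (n+1:ℕ))⁻¹ := by
    rw [← zpow_natCast (Dn y), ← zpow_neg]; norm_num
  have h2 : Dn y ^ ((-(n+1:ℤ)) - 1) = (Dn y ^ (n+2:ℕ))⁻¹ := by
    rw [← zpow_natCast (Dn y), ← zpow_neg]; norm_num; ring_nf
  simp only [ContinuousLinearMap.add_apply, ContinuousLinearMap.smul_apply,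
    ContinuousLinearMap.coe_smul', Pi.smul_apply, innerSL_apply_apply, inner_add_left,
    real_inner_smul_left, smul_eq_mul, Fgen, h1, h2]
  field_simp
  push_cast
  ring

lemma genHasF' (p q r p' q' r' : ℝ) (n : ℕ) (y : E4) (hy : Dn y ≠ 0)
    (hp' : p' = -(n+1:ℝ)*p) (hq' : q' = -(n+1:ℝ)*q) (hr' : r' = -(n:ℝ)*r) :
    HasFDerivAt (Fgen p q r (n+1))
      (innerSL ℝ ((Fgen p' q' r' (n+2) y) • Gr y + (Fgen q 0 0 (n+1) y) • e3)) y := by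
  subst hp' hq' hr'; exact genHasF p q r n y hy

/-- `innerSL` as a real-linear CLM into the dual. -/
def toCLM : E4 →L[ℝ] (E4 →L[ℝ] ℝ) :=
  LinearMap.toContinuousLinearMap
    { toFun := fun g => innerSL ℝ g
      map_add' := by intro a b; ext v; simp [inner_add_left]
      map_smul' := by intro c a; ext v; simp [real_inner_smul_left] }

@[simp] lemma toCLM_apply (g v : E4) : toCLM g v = ⟪g, v⟫ := rfl

lemma toCLM_eq_innerSL (g : E4) : toCLM g = innerSL ℝ g := rfl

lemma hasFDerivAt_Gr (x : E4) :
    HasFDerivAt Gr ((2*cA^2) • ContinuousLinearMap.id ℝ E4) x := by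
  have h := (hasFDerivAt_const ((2*cA) • e3) x).add
    ((hasFDerivAt_id (𝕜 := ℝ) x).const_smul ((2*cA^2 : ℝ)))
  rw [zero_add] at h
  exact h

lemma lap_eq (U : Set E4) (hU : IsOpen U) (x : E4) (hx : x ∈ U)
    (u α β : E4 → ℝ) (gα gβ : E4)
    (hu : ∀ y ∈ U, HasFDerivAt u (innerSL ℝ (α y • Gr y + β y • e3)) y)
    (hα : HasFDerivAt α (innerSL ℝ gα) x)
    (hβ : HasFDerivAt β (innerSL ℝ gβ) x) :
    lap u x = 8*cA^2*(α x) + (∑ i, gα i * Gr x i) + gβ 3 := by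
  have hV : HasFDerivAt (fun y => α y • Gr y + β y • e3)
      ((α x • ((2*cA^2) • ContinuousLinearMap.id ℝ E4)
        + (innerSL ℝ gα).smulRight (Gr x))
        + (β x • (0 : E4 →L[ℝ] E4) + (innerSL ℝ gβ).smulRight e3)) x :=
    (hα.smul (hasFDerivAt_Gr x)).add (hβ.smul (hasFDerivAt_const e3 x))
  set W := (α x • ((2*cA^2) • ContinuousLinearMap.id ℝ E4)
        + (innerSL ℝ gα).smulRight (Gr x))
        + (β x • (0 : E4 →L[ℝ] E4) + (innerSL ℝ gβ).smulRight e3) with hWdef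
  have hVc : HasFDerivAt (fun y => toCLM (α y • Gr y + β y • e3)) (toCLM.comp W) x :=
    toCLM.hasFDerivAt.comp x hV
  have hEv : fderiv ℝ u =ᶠ[𝓝 x] (fun y => toCLM (α y • Gr y + β y • e3)) := by
    filter_upwards [hU.mem_nhds hx] with y hy
    rw [(hu y hy).fderiv, toCLM_eq_innerSL]
  have h2 : fderiv ℝ (fderiv ℝ u) x = toCLM.comp W := by
    rw [hEv.fderiv_eq, hVc.fderiv]
  have key : ∀ i : Fin 4,
      iteratedFDeriv ℝ 2 u x ![EuclideanSpace.single i 1, EuclideanSpace.single i 1]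
        = ⟪W (EuclideanSpace.single i 1), EuclideanSpace.single i 1⟫ := by
    intro i
    rw [iteratedFDeriv_two_apply, h2]
    simp
  rw [lap]
  simp only [key, hWdef]
  simp only [ContinuousLinearMap.add_apply, ContinuousLinearMap.coe_smul', Pi.smul_apply,
    ContinuousLinearMap.smul_apply, ContinuousLinearMap.smulRight_apply,
    ContinuousLinearMap.id_apply, ContinuousLinearMap.zero_apply, innerSL_apply_apply,
    inner_add_left, real_inner_smul_left, smul_zero, zero_add]
  have hsing : ∀ (w : E4) (i : Fin 4), ⟪w, EuclideanSpace.single i (1:ℝ)⟫ = w i := by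
    intro w i; rw [real_inner_comm]; simp [EuclideanSpace.inner_single_left]
  simp only [hsing]
  simp only [Fin.sum_univ_four, e3_apply]
  rw [if_neg (by decide), if_neg (by decide), if_neg (by decide)]
  simp [EuclideanSpace.single_apply]
  ring

lemma lap_eq' (U : Set E4) (hU : IsOpen U) (x : E4) (hx : x ∈ U)
    (u α β : E4 → ℝ) (γ δ ε ζ : ℝ)
    (hu : ∀ y ∈ U, HasFDerivAt u (innerSL ℝ (α y • Gr y + β y • e3)) y)
    (hα : HasFDerivAt α (innerSL ℝ (γ • Gr x + δ • e3)) x)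
    (hβ : HasFDerivAt β (innerSL ℝ (ε • Gr x + ζ • e3)) x) :
    lap u x = 8*cA^2*(α x) + (γ * (4*cA^2*Dn x) + δ * (Gr x 3))
      + (ε * (Gr x 3) + ζ) := by
  rw [lap_eq U hU x hx u α β _ _ hu hα hβ]
  have hn := norm_sq_eq x
  rw [Fin.sum_univ_four] at hn
  congr 1
  · congr 1
    rw [Fin.sum_univ_four]
    simp only [PiLp.add_apply, PiLp.smul_apply, smul_eq_mul,
      Gr_coord, e3_0, e3_1, e3_2, e3_3, Dn, hn]
    ring
  · simp only [PiLp.add_apply, PiLp.smul_apply, smul_eq_mul, e3_3, Gr_3]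
    ring

def U : Set E4 := {y | 0 < Dn y}

lemma U_open : IsOpen U := by
  have hc : Continuous Dn :=
    continuous_iff_continuousAt.2 fun y => (hasFDerivAt_Dn y).differentiableAt.continuousAt
  exact isOpen_lt continuous_const hc

lemma hasFDerivAt_psi (y : E4) (hy : Dn y ≠ 0) :
    HasFDerivAt profileFn
      (innerSL ℝ (Fgen 0 (-c2) (-c1) 2 y • Gr y + Fgen c2 0 0 1 y • e3)) y := by
  have hfun : profileFn = fun z => -c1 * Real.log (Dn z) + c2 * Fgen 0 1 0 1 z := by
    funext z; rw [profileFn_eq, Fgen]; norm_num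
  have hlog : HasFDerivAt (fun z => Real.log (Dn z)) ((Dn y)⁻¹ • innerSL ℝ (Gr y)) y :=
    (hasFDerivAt_Dn y).log hy
  have hq := genHasF 0 1 0 0 y hy
  have h := (hlog.const_mul (-c1)).add (hq.const_mul c2)
  rw [hfun]
  refine h.congr_fderiv ?_
  ext v
  simp only [ContinuousLinearMap.add_apply, ContinuousLinearMap.coe_smul', Pi.smul_apply,
    ContinuousLinearMap.smul_apply, innerSL_apply_apply, inner_add_left, real_inner_smul_left,
    smul_eq_mul, Fgen]
  field_simp
  ring

def Phi : E4 → ℝ := Fgen (-4*cA*c2) (-4*cA^2*c2) (-4*cA^2*c1) 2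

lemma stage1 : ∀ y ∈ U, lap profileFn y = Phi y := by
  intro y hy
  have hne : Dn y ≠ 0 := ne_of_gt hy
  have h := lap_eq' U U_open y hy profileFn _ _ _ _ _ _
    (fun z hz => hasFDerivAt_psi z (ne_of_gt hz))
    (genHasF' 0 (-c2) (-c1) 0 (2*c2) c1 1 y hne (by norm_num) (by norm_num) (by norm_num))
    (genHasF' c2 0 0 (-c2) 0 0 0 y hne (by norm_num) (by norm_num) (by norm_num))
  rw [h]
  simp only [Phi, Fgen, Gr_3]
  field_simp
  ring

lemma stage2 (x : E4) (hx : x ∈ U) : lap Phi x = 0 := by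
  have hne : Dn x ≠ 0 := ne_of_gt hx
  have h := lap_eq' U U_open x hx Phi _ _ _ _ _ _
    (fun z hz => genHasF' (-4*cA*c2) (-4*cA^2*c2) (-4*cA^2*c1)
      (8*cA*c2) (8*cA^2*c2) (4*cA^2*c1) 1 z (ne_of_gt hz)
      (by norm_num; ring) (by norm_num; ring) (by norm_num))
    (genHasF' (8*cA*c2) (8*cA^2*c2) (4*cA^2*c1)
      (-24*cA*c2) (-24*cA^2*c2) (-8*cA^2*c1) 2 x hne
      (by norm_num; ring) (by norm_num; ring) (by norm_num; ring))
    (genHasF' (-4*cA^2*c2) 0 0 (8*cA^2*c2) 0 0 1 x hne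
      (by norm_num; ring) (by norm_num) (by norm_num))
  rw [h]
  simp only [Phi, Fgen, Gr_3]
  field_simp
  ring

lemma lap_congr {f g : E4 → ℝ} {x : E4} (h : f =ᶠ[𝓝 x] g) : lap f x = lap g x := by
  unfold lap
  refine Finset.sum_congr rfl fun i _ => ?_
  rw [← iteratedFDerivWithin_univ, ← iteratedFDerivWithin_univ,
    Filter.EventuallyEq.iteratedFDerivWithin_eq
      (by simpa [nhdsWithin_univ] using h) h.self_of_nhds 2]

lemma part1 (x : E4) (hx3 : 0 < x 3) : lap (lap profileFn) x = 0 := by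
  have hxU : x ∈ U := Dn_pos x hx3.le
  have hEv : lap profileFn =ᶠ[𝓝 x] Phi :=
    eventually_of_mem (U_open.mem_nhds hxU) stage1
  rw [lap_congr hEv, stage2 x hxU]

lemma part2 (x : E4) (hx0 : x 3 = 0) :
    fderiv ℝ profileFn x (EuclideanSpace.single 3 1) = 0 := by
  have hD : 0 < Dn x := Dn_pos x (by rw [hx0])
  rw [(hasFDerivAt_psi x hD.ne').fderiv]
  show (innerSL ℝ) _ e3 = 0
  rw [innerSL_apply_apply, inner_add_left, real_inner_smul_left, real_inner_smul_left,
    inner_e3, inner_e3, Gr_3, e3_3, hx0]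
  simp only [Fgen, hx0]
  field_simp
  linear_combination (Dn x) * hc2

lemma part3 (x : E4) (hx0 : x 3 = 0) :
    fderiv ℝ (lap profileFn) x (EuclideanSpace.single 3 1)
      = Real.exp (24 * π ^ 2 * profileFn x) := by
  have hD : 0 < Dn x := Dn_pos x (by rw [hx0])
  have hxU : x ∈ U := hD
  have hEv : lap profileFn =ᶠ[𝓝 x] Phi :=
    eventually_of_mem (U_open.mem_nhds hxU) stage1
  rw [hEv.fderiv_eq]
  have hPhi := genHasF' (-4*cA*c2) (-4*cA^2*c2) (-4*cA^2*c1)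
      (8*cA*c2) (8*cA^2*c2) (4*cA^2*c1) 1 x hD.ne'
      (by norm_num; ring) (by norm_num; ring) (by norm_num)
  have hPhi2 : HasFDerivAt Phi (innerSL ℝ
      (Fgen (8*cA*c2) (8*cA^2*c2) (4*cA^2*c1) 3 x • Gr x
        + Fgen (-4*cA^2*c2) 0 0 2 x • e3)) x := hPhi
  rw [hPhi2.fderiv]
  show (innerSL ℝ) _ e3 = _
  rw [innerSL_apply_apply, inner_add_left, real_inner_smul_left, real_inner_smul_left,
    inner_e3, inner_e3, Gr_3, e3_3, hx0]
  have hψ : 24 * π ^ 2 * profileFn x = Real.log ((Dn x ^ 3)⁻¹) := by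
    rw [profileFn_eq, hx0, Real.log_inv, Real.log_pow]
    have hπ : π ≠ 0 := Real.pi_ne_zero
    simp only [c1]
    push_cast
    field_simp
    ring
  rw [hψ, Real.exp_log (by positivity)]
  simp only [Fgen, hx0]
  have h1 : Dn x ≠ 0 := hD.ne'
  field_simp
  linear_combination (1 - Dn x/4) * h16 + (Dn x/4) * h32

lemma part4 (x : E4) (hx : 0 ≤ x 3) : profileFn x ≤ 0 := by
  have hA : 0 < cA := cA_pos
  set t := x 3 with ht
  set S : ℝ := ∑ i : Fin 3, (x (Fin.castSucc i)) ^ 2 with hSdef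
  have hS : 0 ≤ (π / 2) ^ ((4:ℝ)/3) * S := by positivity
  set P : ℝ := 1 + cA * t with hPdef
  have hP1 : 1 ≤ P := by nlinarith
  have hPpos : 0 < P := by linarith
  have hDen : profileDen x = P^2 + (π / 2) ^ ((4:ℝ)/3) * S := by
    rw [profileDen, show (π/2) ^ ((2:ℝ)/3) = cA from rfl]
  have hP2D : P^2 ≤ profileDen x := by rw [hDen]; linarith
  have hDpos : (0:ℝ) < profileDen x := by nlinarith
  have hlogP : 1 - 1/P ≤ Real.log P := by
    have h := Real.log_le_sub_one_of_pos (show (0:ℝ) < P⁻¹ by positivity)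
    rw [Real.log_inv] at h
    have : P⁻¹ = 1/P := by rw [one_div]
    linarith [this ▸ h]
  have key : 2*cA*t/profileDen x ≤ Real.log (profileDen x) := by
    have h0 : 0 ≤ 2*cA*t := by positivity
    have h1 : 2*cA*t/profileDen x ≤ 2*cA*t/P^2 := by
      gcongr
    have h2 : 2*cA*t/P^2 ≤ 2*cA*t/P := by
      gcongr
      nlinarith
    have h3 : 2*cA*t/P = 2*(1 - 1/P) := by
      rw [hPdef]; field_simp; ring
    have h5 : (2:ℝ)*Real.log P = Real.log (P^2) := by
      rw [Real.log_pow]; norm_num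
    have h6 : Real.log (P^2) ≤ Real.log (profileDen x) :=
      Real.log_le_log (by positivity) hP2D
    linarith
  have hFn : profileFn x = c1 * (2*cA*t/profileDen x - Real.log (profileDen x)) := by
    rw [profileFn, show (1:ℝ)/(8*π^2) = c1 from rfl,
      show (1:ℝ)/((2:ℝ)^((8:ℝ)/3) * π^((4:ℝ)/3)) = c2 from rfl, hc2]
    ring
  rw [hFn]
  have : 2*cA*t/profileDen x - Real.log (profileDen x) ≤ 0 := by linarith
  nlinarith [c1_pos]

lemma part5 : profileFn 0 = 0 := by
  have h0 : profileDen 0 = 1 := by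
    simp [profileDen]
  simp [profileFn, h0]

end ProfileAux


/-- **The explicit blow-up profile solves the Liouville boundary value problem.**
On the closed half space `ℝ⁴₊ = {(x',t) : t ≥ 0}` the function `ψ = profileFn` satisfies
`Δ²ψ = 0` in `{t > 0}`; `∂ψ/∂t = 0` on `{t = 0}`; `∂(Δψ)/∂t = exp(24π²ψ)` on `{t = 0}`;
and `ψ(x',t) ≤ ψ(0) = 0` for all `(x',t)` with `t ≥ 0`. -/


theorem profile_solves_liouville :
    (∀ x : E4, 0 < x 3 → lap (lap profileFn) x = 0) ∧
    (∀ x : E4, x 3 = 0 → fderiv ℝ profileFn x (EuclideanSpace.single 3 1) = 0) ∧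
    (∀ x : E4, x 3 = 0 →
      fderiv ℝ (lap profileFn) x (EuclideanSpace.single 3 1)
        = Real.exp (24 * π ^ 2 * profileFn x)) ∧
    (∀ x : E4, 0 ≤ x 3 → profileFn x ≤ 0) ∧
    profileFn 0 = 0 := by
  exact ⟨fun x hx => ProfileAux.part1 x hx,
    fun x hx => ProfileAux.part2 x hx,
    fun x hx => ProfileAux.part3 x hx,
    fun x hx => ProfileAux.part4 x hx,
    ProfileAux.part5⟩
end
end
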